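/- Let ε be a real-valued random variable admitting a density f that is nondecreasing on (−∞,0] and nonincreasing on [0,∞) (unimodal with mode 0). Then the cumulative distribution function of |ε|, i.e. the map x ↦ P(|ε| ≤ x), is concave on [0,∞). -/

import Mathlib

open MeasureTheory Set

private lemma stmt8_aux {f : ℝ → ℝ} (hmono : MonotoneOn f (Iic 0))
    (hanti : AntitoneOn f (Ici 0)) :
    AntitoneOn (fun t => f t + f (-t)) (Ici 0) := by
  intro a ha b hb hab
  have h1 : f b ≤ f a := hanti ha hb hab
  have h2 : f (-b) ≤ f (-a) := hmono (by simpa using hb) (by simpa using ha) (by linarith)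
  simpa using add_le_add h1 h2

/-- If `ε` admits a density `f` (w.r.t. Lebesgue measure) that is nondecreasing on
`(-∞,0]` and nonincreasing on `[0,∞)` (unimodal with mode 0), then the CDF of `|ε|`,
i.e. `x ↦ P(|ε| ≤ x)`, is concave on `[0,∞)`. -/
theorem stmt_8 {Ω : Type*} [MeasurableSpace Ω] (μ : Measure Ω) [IsProbabilityMeasure μ]
    (ε : Ω → ℝ) (hε : Measurable ε)
    (f : ℝ → ℝ) (hfmeas : Measurable f) (hfnonneg : ∀ x, 0 ≤ f x)
    (hdensity : Measure.map ε μ = volume.withDensity fun x => ENNReal.ofReal (f x))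
    (hmono : MonotoneOn f (Iic 0)) (hanti : AntitoneOn f (Ici 0)) :
    ConcaveOn ℝ (Ici 0) fun x => (μ {ω | |ε ω| ≤ x}).toReal := by
  set F : ℝ → ℝ := fun t => f t + f (-t) with hF
  have hFanti : AntitoneOn F (Ici 0) := stmt8_aux hmono hanti
  -- integrability pieces
  have hint1 : ∀ x : ℝ, 0 ≤ x → IntervalIntegrable f volume 0 x := by
    intro x hx
    apply AntitoneOn.intervalIntegrable
    exact hanti.mono (by rw [uIcc_of_le hx]; exact fun t ht => ht.1)
  have hint2 : ∀ x : ℝ, 0 ≤ x → IntervalIntegrable (fun t => f (-t)) volume 0 x := by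
    intro x hx
    apply AntitoneOn.intervalIntegrable
    intro a ha b hb hab
    rw [uIcc_of_le hx] at ha hb
    exact hmono (by simp; linarith [hb.1]) (by simp; linarith [ha.1]) (by linarith)
  have hintF : ∀ x : ℝ, 0 ≤ x → IntervalIntegrable F volume 0 x := fun x hx =>
    (hint1 x hx).add (hint2 x hx)
  -- key formula
  have key : ∀ x : ℝ, 0 ≤ x →
      (μ {ω | |ε ω| ≤ x}).toReal = ∫ t in (0:ℝ)..x, F t := by
    intro x hx
    have hset : {ω | |ε ω| ≤ x} = ε ⁻¹' (Icc (-x) x) := by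
      ext ω; simp [abs_le]
    have h1 : μ {ω | |ε ω| ≤ x} = ∫⁻ t in Icc (-x) x, ENNReal.ofReal (f t) := by
      rw [hset, ← Measure.map_apply hε measurableSet_Icc, hdensity,
        withDensity_apply _ measurableSet_Icc]
    have h2 : ∫ t in Icc (-x) x, f t =
        ((∫⁻ t in Icc (-x) x, ENNReal.ofReal (f t))).toReal := by
      rw [integral_eq_lintegral_of_nonneg_ae (Filter.Eventually.of_forall hfnonneg)
        hfmeas.aestronglyMeasurable]
    rw [h1, ← h2]
    have hxx : (-x : ℝ) ≤ x := by linarith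
    rw [integral_Icc_eq_integral_Ioc, ← intervalIntegral.integral_of_le hxx]
    have hsplit : (∫ t in (-x)..(0:ℝ), f t) + ∫ t in (0:ℝ)..x, f t = ∫ t in (-x)..x, f t := by
      apply intervalIntegral.integral_add_adjacent_intervals
      · rw [IntervalIntegrable.iff_comp_neg]
        simpa using (hint2 x hx).symm
      · exact hint1 x hx
    have hrefl : (∫ t in (0:ℝ)..x, f (-t)) = ∫ t in (-x)..(0:ℝ), f t := by
      simpa using intervalIntegral.integral_comp_neg (a := (0:ℝ)) (b := x) f
    rw [← hsplit, ← hrefl, add_comm, ← intervalIntegral.integral_add (hint1 x hx) (hint2 x hx)]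
  -- concavity via slopes
  apply concaveOn_of_slope_anti_adjacent (convex_Ici 0)
  intro x y z hx hz hxy hyz
  have hx0 : (0:ℝ) ≤ x := hx
  have hy0 : (0:ℝ) ≤ y := le_of_lt (lt_of_le_of_lt hx0 hxy)
  have hz0 : (0:ℝ) ≤ z := hz
  have hFxy : IntervalIntegrable F volume x y :=
    ((hintF x hx0).symm.trans (hintF y hy0))
  have hFyz : IntervalIntegrable F volume y z :=
    ((hintF y hy0).symm.trans (hintF z hz0))
  have hgy_x : (μ {ω | |ε ω| ≤ y}).toReal - (μ {ω | |ε ω| ≤ x}).toReal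
      = ∫ t in x..y, F t := by
    rw [key x hx0, key y hy0,
      ← intervalIntegral.integral_add_adjacent_intervals (hintF x hx0) hFxy]
    ring
  have hgz_y : (μ {ω | |ε ω| ≤ z}).toReal - (μ {ω | |ε ω| ≤ y}).toReal
      = ∫ t in y..z, F t := by
    rw [key y hy0, key z hz0,
      ← intervalIntegral.integral_add_adjacent_intervals (hintF y hy0) hFyz]
    ring
  rw [hgy_x, hgz_y]
  -- upper bound on [y,z], lower bound on [x,y]
  have hub : (∫ t in y..z, F t) ≤ (z - y) * F y := by
    rw [intervalIntegral.integral_of_le hyz.le]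
    calc ∫ t in Ioc y z, F t ≤ ∫ _t in Ioc y z, F y := by
          apply setIntegral_mono_on
            hFyz.1
            (integrableOn_const (by simp) (by simp))
            measurableSet_Ioc
          intro t ht
          exact hFanti hy0 (le_trans hy0 ht.1.le) ht.1.le
      _ = (z - y) * F y := by
          rw [setIntegral_const]
          simp [Real.volume_Ioc, ENNReal.toReal_ofReal (by linarith : (0:ℝ) ≤ z - y), hyz.le]
  have hlb : (y - x) * F y ≤ ∫ t in x..y, F t := by
    rw [intervalIntegral.integral_of_le hxy.le]
    calc (y - x) * F y = ∫ _t in Ioc x y, F y := by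
          rw [setIntegral_const]
          simp [Real.volume_Ioc, ENNReal.toReal_ofReal (by linarith : (0:ℝ) ≤ y - x), hxy.le]
      _ ≤ ∫ t in Ioc x y, F t := by
          apply setIntegral_mono_on
            (integrableOn_const (by simp) (by simp))
            hFxy.1
            measurableSet_Ioc
          intro t ht
          exact hFanti (le_trans hx0 ht.1.le) hy0 ht.2
  have h1 : (∫ t in y..z, F t) / (z - y) ≤ F y :=
    (div_le_iff₀ (by linarith)).2 (by linarith [hub])
  have h2 : F y ≤ (∫ t in x..y, F t) / (y - x) :=
    (le_div_iff₀ (by linarith)).2 (by linarith [hlb])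
  linarith
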